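/- Fix μ ∈ ℂ and x ∈ ℂ with x not lying in the real segment [−2, 2] and x² ≠ μ. For y ∈ ℂ with y ≠ 0 and y² ≠ μ, define z(y) = (xy/2)(1 − √(1 − 4(1/x² + 1/y² − μ/(x²y²)))), where √ is the principal complex square root. Then Ψ_μ(x, y; z(y)) tends to h_μ(x) as |y| → ∞ (i.e., along the filter of complements of bounded sets in ℂ). -/

import Mathlib

/-- The principal complex square root: the branch with nonnegative real part. -/
noncomputable def csqrt (w : ℂ) : ℂ := w ^ ((1 : ℂ) / 2)

/-- The edge value `Ψ_μ(x,y;z) = z/(xy) − (1/3)(1/2 − z/(xy))(μ/(x²−μ) + μ/(y²−μ))`. -/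
noncomputable def Psi (μ x y z : ℂ) : ℂ :=
  z / (x * y) - (1 / 3) * (1 / 2 - z / (x * y)) * (μ / (x ^ 2 - μ) + μ / (y ^ 2 - μ))

/-- The function `h_μ(x) = (1/2)(1 − ((x² − (2/3)μ)/(x² − μ))·√(1 − 4/x²))`. -/
noncomputable def hmu (μ x : ℂ) : ℂ :=
  (1 / 2) * (1 - ((x ^ 2 - (2 / 3) * μ) / (x ^ 2 - μ)) * csqrt (1 - 4 / x ^ 2))

open Filter Complex Bornology

/-- If `x` avoids the segment `[-2,2]`, then `1 - 4/x²` lies in the slit plane. -/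
lemma slit_aux (x : ℂ) (hx : x ∉ (fun r : ℝ => (r : ℂ)) '' Set.Icc (-2 : ℝ) 2) :
    (1 - 4 / x ^ 2) ∈ Complex.slitPlane := by
  have hx0 : x ≠ 0 := by rintro rfl; exact hx ⟨0, by norm_num, by simp⟩
  rw [Complex.mem_slitPlane_iff]
  by_contra h
  push_neg at h
  obtain ⟨hre, him⟩ := h
  have hD : Complex.normSq (x ^ 2) ≠ 0 := by
    simpa using pow_ne_zero 2 hx0
  simp only [Complex.sub_im, Complex.one_im, Complex.div_im, Complex.normSq_apply,
    pow_two, Complex.mul_re, Complex.mul_im, Complex.re_ofNat, Complex.im_ofNat] at him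
  simp only [Complex.sub_re, Complex.one_re, Complex.div_re, Complex.normSq_apply,
    pow_two, Complex.mul_re, Complex.mul_im, Complex.re_ofNat, Complex.im_ofNat] at hre
  simp only [Complex.normSq_apply, pow_two, Complex.mul_re, Complex.mul_im] at hD
  set a := x.re with ha
  set b := x.im with hb
  set D := (a*a - b*b)*(a*a - b*b) + (a*b + b*a)*(a*b + b*a) with hDdef
  have hD' : 0 < D := by
    rcases Ne.lt_or_gt hD with h | h
    · nlinarith [sq_nonneg (a*a-b*b), sq_nonneg (a*b+b*a)]
    · exact h
  have hab : a * b = 0 := by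
    field_simp at him
    linarith
  have hDle : D ≤ 4 * (a*a - b*b) := by
    have h1 : (1 : ℝ) ≤ 4 * (a*a - b*b) / D := by
      simp only [zero_mul, zero_div, add_zero] at hre; linarith
    calc D = 1 * D := (one_mul D).symm
    _ ≤ (4 * (a*a - b*b) / D) * D := by
        exact mul_le_mul_of_nonneg_right h1 hD'.le
    _ = 4 * (a*a - b*b) := by field_simp
  rcases mul_eq_zero.1 hab with h0 | h0
  · nlinarith [sq_nonneg b]
  · have ha0 : a ≠ 0 := by
      intro h; apply hx0; apply Complex.ext <;> simp [← ha, ← hb, h, h0]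
    refine hx ⟨a, ⟨?_, ?_⟩, ?_⟩
    · nlinarith [sq_nonneg (a+2), sq_nonneg a, sq_nonneg (a*a)]
    · nlinarith [sq_nonneg (a-2), sq_nonneg a]
    · apply Complex.ext <;> simp [← ha, ← hb, h0]

/-- with `x ∉ [−2,2]`, `x² ≠ μ`, and
`z(y) = (xy/2)(1 − √(1 − 4(1/x² + 1/y² − μ/(x²y²))))`, the value `Ψ_μ(x,y;z(y))`
tends to `h_μ(x)` as `|y| → ∞`, i.e. along the cobounded filter on `ℂ`. -/
theorem Psi_tendsto_hmu (μ x : ℂ)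
    (hx : x ∉ (fun r : ℝ => (r : ℂ)) '' Set.Icc (-2 : ℝ) 2) (hxμ : x ^ 2 ≠ μ)
    (z : ℂ → ℂ)
    (hz : ∀ y : ℂ, z y =
      (x * y / 2) * (1 - csqrt (1 - 4 * (1 / x ^ 2 + 1 / y ^ 2 - μ / (x ^ 2 * y ^ 2))))) :
    Filter.Tendsto (fun y : ℂ => Psi μ x y (z y)) (Bornology.cobounded ℂ)
      (nhds (hmu μ x)) := by
  have hx0 : x ≠ 0 := by rintro rfl; exact hx ⟨0, by norm_num, by simp⟩
  have hslit := slit_aux x hx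
  have hxsub : x ^ 2 - μ ≠ 0 := sub_ne_zero.2 hxμ
  set S : ℂ → ℂ := fun y =>
    csqrt (1 - 4 * (1 / x ^ 2 + 1 / y ^ 2 - μ / (x ^ 2 * y ^ 2))) with hSdef
  -- the limit of the simplified expression
  have hsq : Tendsto (fun y : ℂ => y ^ 2) (cobounded ℂ) (cobounded ℂ) := by
    rw [← tendsto_norm_atTop_iff_cobounded]
    have : Tendsto (fun y : ℂ => ‖y‖ ^ 2) (cobounded ℂ) atTop :=
      (tendsto_pow_atTop two_ne_zero).comp tendsto_norm_cobounded_atTop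
    simpa [norm_pow] using this
  have hsub : Tendsto (fun y : ℂ => y ^ 2 - μ) (cobounded ℂ) (cobounded ℂ) := by
    rw [← tendsto_norm_atTop_iff_cobounded]
    apply tendsto_atTop_mono (fun y => norm_sub_norm_le (y^2) μ)
    exact tendsto_atTop_add_const_right _ (-‖μ‖) (by
      simpa [sub_eq_add_neg] using (tendsto_norm_atTop_iff_cobounded.2 hsq)) |>.congr
        (fun y => by simp [norm_pow]; ring)
  have hinv2 : Tendsto (fun y : ℂ => 1 / y ^ 2) (cobounded ℂ) (nhds 0) := by
    simpa [one_div, Function.comp_def] using tendsto_inv₀_cobounded.comp hsq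
  have hB : Tendsto (fun y : ℂ => μ / (y ^ 2 - μ)) (cobounded ℂ) (nhds 0) := by
    simp only [div_eq_mul_inv]
    simpa using tendsto_const_nhds.mul (tendsto_inv₀_cobounded.comp hsub)
  have hinner : Tendsto (fun y : ℂ => 1 - 4 * (1 / x ^ 2 + 1 / y ^ 2 - μ / (x ^ 2 * y ^ 2)))
      (cobounded ℂ) (nhds (1 - 4 / x ^ 2)) := by
    have hrw : ∀ y : ℂ, μ / (x ^ 2 * y ^ 2) = (μ / x ^ 2) * (1 / y ^ 2) := by
      intro y; rw [div_mul_div_comm, mul_one]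
    simp only [hrw]
    have : Tendsto (fun y : ℂ => 1 - 4 * (1 / x ^ 2 + 1 / y ^ 2 - (μ / x ^ 2) * (1 / y ^ 2)))
        (cobounded ℂ)
        (nhds (1 - 4 * (1 / x ^ 2 + 0 - (μ / x ^ 2) * 0))) :=
      tendsto_const_nhds.sub (tendsto_const_nhds.mul
        ((tendsto_const_nhds.add hinv2).sub (tendsto_const_nhds.mul hinv2)))
    simpa [div_eq_mul_inv] using this
  have hS : Tendsto S (cobounded ℂ) (nhds (csqrt (1 - 4 / x ^ 2))) :=
    ((continuousAt_cpow_const hslit).tendsto).comp hinner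
  have hf : Tendsto (fun y : ℂ =>
      (1/2)*(1 - S y) - (1/3)*(1/2 - (1/2)*(1 - S y)) * (μ / (x ^ 2 - μ) + μ / (y ^ 2 - μ)))
      (cobounded ℂ)
      (nhds ((1/2)*(1 - csqrt (1 - 4 / x ^ 2))
        - (1/3)*(1/2 - (1/2)*(1 - csqrt (1 - 4 / x ^ 2))) * (μ / (x ^ 2 - μ) + 0))) :=
    (tendsto_const_nhds.mul (tendsto_const_nhds.sub hS)).sub
      ((tendsto_const_nhds.mul (tendsto_const_nhds.sub
        (tendsto_const_nhds.mul (tendsto_const_nhds.sub hS)))).mul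
        (tendsto_const_nhds.add hB))
  -- identify the limit value with hmu
  have hval : (1/2)*(1 - csqrt (1 - 4 / x ^ 2))
      - (1/3)*(1/2 - (1/2)*(1 - csqrt (1 - 4 / x ^ 2))) * (μ / (x ^ 2 - μ) + 0)
      = hmu μ x := by
    rw [hmu]
    field_simp
    ring
  rw [← hval]
  -- eventual equality with Psi
  apply hf.congr'
  have hev : ∀ᶠ y : ℂ in cobounded ℂ, (0 : ℝ) < ‖y‖ :=
    tendsto_norm_cobounded_atTop.eventually (eventually_gt_atTop 0)
  filter_upwards [hev] with y hy
  have hy0 : y ≠ 0 := by simpa using hy.ne'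
  have hxy : x * y ≠ 0 := mul_ne_zero hx0 hy0
  have hdiv : z y / (x * y) = (1/2) * (1 - S y) := by
    rw [hz y, hSdef]
    field_simp
  simp only [Psi, hdiv]
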